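/- Let Q = ([0,1],&,1) with & a continuous t-norm and let A be a D(Q)-category. Every weight φ on A generated by a biCauchy net {x_λ} is a Cauchy weight: the coweight ψ generated by {x_λ} is left adjoint to φ, i.e., ψ∘φ ≤ A and φ∘ψ ≥ tφ. -/
import Mathlib

noncomputable def tres (f : ℝ → ℝ → ℝ) (x y : ℝ) : ℝ :=
  sSup {z | z ∈ Set.Icc (0:ℝ) 1 ∧ f x z ≤ y}

def IsContTNorm (f : ℝ → ℝ → ℝ) : Prop :=
  (∀ a ∈ Set.Icc (0:ℝ) 1, ∀ b ∈ Set.Icc (0:ℝ) 1, f a b ∈ Set.Icc (0:ℝ) 1) ∧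
  ContinuousOn (fun p : ℝ × ℝ => f p.1 p.2) (Set.Icc 0 1 ×ˢ Set.Icc 0 1) ∧
  (∀ a ∈ Set.Icc (0:ℝ) 1, ∀ b ∈ Set.Icc (0:ℝ) 1, f a b = f b a) ∧
  (∀ a ∈ Set.Icc (0:ℝ) 1, ∀ b ∈ Set.Icc (0:ℝ) 1, ∀ c ∈ Set.Icc (0:ℝ) 1,
    f (f a b) c = f a (f b c)) ∧
  (∀ a ∈ Set.Icc (0:ℝ) 1, ∀ b ∈ Set.Icc (0:ℝ) 1, ∀ c ∈ Set.Icc (0:ℝ) 1,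
    a ≤ b → f a c ≤ f b c) ∧
  (∀ a ∈ Set.Icc (0:ℝ) 1, f a 1 = a)

namespace Stmt13Aux
open Set

variable {f : ℝ → ℝ → ℝ}

lemma tn_mem (ht : IsContTNorm f) {a b : ℝ} (ha : a ∈ Icc (0:ℝ) 1) (hb : b ∈ Icc (0:ℝ) 1) :
    f a b ∈ Icc (0:ℝ) 1 := ht.1 a ha b hb

lemma tn_comm (ht : IsContTNorm f) {a b : ℝ} (ha : a ∈ Icc (0:ℝ) 1) (hb : b ∈ Icc (0:ℝ) 1) :
    f a b = f b a := ht.2.2.1 a ha b hb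

lemma tn_assoc (ht : IsContTNorm f) {a b c : ℝ} (ha : a ∈ Icc (0:ℝ) 1)
    (hb : b ∈ Icc (0:ℝ) 1) (hc : c ∈ Icc (0:ℝ) 1) : f (f a b) c = f a (f b c) :=
  ht.2.2.2.1 a ha b hb c hc

lemma tn_mono_left (ht : IsContTNorm f) {a b c : ℝ} (ha : a ∈ Icc (0:ℝ) 1)
    (hb : b ∈ Icc (0:ℝ) 1) (hc : c ∈ Icc (0:ℝ) 1) (hab : a ≤ b) : f a c ≤ f b c :=
  ht.2.2.2.2.1 a ha b hb c hc hab

lemma tn_unit (ht : IsContTNorm f) {a : ℝ} (ha : a ∈ Icc (0:ℝ) 1) : f a 1 = a :=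
  ht.2.2.2.2.2 a ha

lemma tn_mono_right (ht : IsContTNorm f) {a b c : ℝ} (ha : a ∈ Icc (0:ℝ) 1)
    (hb : b ∈ Icc (0:ℝ) 1) (hc : c ∈ Icc (0:ℝ) 1) (hbc : b ≤ c) : f a b ≤ f a c := by
  rw [tn_comm ht ha hb, tn_comm ht ha hc]
  exact tn_mono_left ht hb hc ha hbc

lemma tn_zero (ht : IsContTNorm f) {a : ℝ} (ha : a ∈ Icc (0:ℝ) 1) : f a 0 = 0 := by
  have h01 : (0:ℝ) ∈ Icc (0:ℝ) 1 := ⟨le_refl 0, zero_le_one⟩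
  have h11 : (1:ℝ) ∈ Icc (0:ℝ) 1 := ⟨zero_le_one, le_refl 1⟩
  have h1 : f a 0 ≤ f 1 0 := tn_mono_left ht ha h11 h01 ha.2
  have h2 : f 1 0 = 0 := by rw [tn_comm ht h11 h01, tn_unit ht h01]
  have h3 : 0 ≤ f a 0 := (tn_mem ht ha h01).1
  linarith

lemma tn_le_left (ht : IsContTNorm f) {a b : ℝ} (ha : a ∈ Icc (0:ℝ) 1)
    (hb : b ∈ Icc (0:ℝ) 1) : f a b ≤ a := by
  have := tn_mono_right ht ha hb ⟨zero_le_one, le_refl 1⟩ hb.2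
  rwa [tn_unit ht ha] at this

lemma tn_le_right (ht : IsContTNorm f) {a b : ℝ} (ha : a ∈ Icc (0:ℝ) 1)
    (hb : b ∈ Icc (0:ℝ) 1) : f a b ≤ b := by
  rw [tn_comm ht ha hb]; exact tn_le_left ht hb ha

lemma tn_contOn (ht : IsContTNorm f) {a : ℝ} (ha : a ∈ Icc (0:ℝ) 1) :
    ContinuousOn (fun z => f a z) (Icc (0:ℝ) 1) := by
  have : ContinuousOn ((fun p : ℝ × ℝ => f p.1 p.2) ∘ (fun z => ((a, z) : ℝ × ℝ)))
      (Icc (0:ℝ) 1) := by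
    apply ht.2.1.comp (by fun_prop)
    intro z hz
    exact ⟨ha, hz⟩
  exact this

lemma tres_set_compact (ht : IsContTNorm f) {a c : ℝ} (ha : a ∈ Icc (0:ℝ) 1) :
    IsCompact {z | z ∈ Icc (0:ℝ) 1 ∧ f a z ≤ c} := by
  have hcl : IsClosed (Icc (0:ℝ) 1 ∩ (fun z => f a z) ⁻¹' Iic c) :=
    (tn_contOn ht ha).preimage_isClosed_of_isClosed isClosed_Icc isClosed_Iic
  have : {z | z ∈ Icc (0:ℝ) 1 ∧ f a z ≤ c} = Icc (0:ℝ) 1 ∩ (fun z => f a z) ⁻¹' Iic c := rfl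
  rw [this]
  exact isCompact_Icc.of_isClosed_subset hcl Set.inter_subset_left

lemma tres_set_nonempty (ht : IsContTNorm f) {a c : ℝ} (ha : a ∈ Icc (0:ℝ) 1)
    (hc0 : 0 ≤ c) : ({z | z ∈ Icc (0:ℝ) 1 ∧ f a z ≤ c} : Set ℝ).Nonempty :=
  ⟨0, ⟨le_refl 0, zero_le_one⟩, by rw [tn_zero ht ha]; exact hc0⟩

lemma tres_mem (ht : IsContTNorm f) {a c : ℝ} (ha : a ∈ Icc (0:ℝ) 1)
    (hc0 : 0 ≤ c) : tres f a c ∈ Icc (0:ℝ) 1 := by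
  have := (tres_set_compact ht ha (c := c)).sSup_mem (tres_set_nonempty ht ha hc0)
  exact this.1

lemma f_tres_le (ht : IsContTNorm f) {a c : ℝ} (ha : a ∈ Icc (0:ℝ) 1) (hc0 : 0 ≤ c) :
    f a (tres f a c) ≤ c :=
  ((tres_set_compact ht ha (c := c)).sSup_mem (tres_set_nonempty ht ha hc0)).2

lemma le_tres (ht : IsContTNorm f) {a c z : ℝ} (ha : a ∈ Icc (0:ℝ) 1)
    (hz : z ∈ Icc (0:ℝ) 1) (h : f a z ≤ c) : z ≤ tres f a c :=
  le_csSup (tres_set_compact ht ha (c := c)).bddAbove ⟨hz, h⟩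

lemma tn_surj (ht : IsContTNorm f) {a c : ℝ} (ha : a ∈ Icc (0:ℝ) 1)
    (hc0 : 0 ≤ c) (hca : c ≤ a) : ∃ p ∈ Icc (0:ℝ) 1, f a p = c := by
  have h := intermediate_value_Icc (zero_le_one) (tn_contOn ht ha)
  have hc : c ∈ Icc (f a 0) (f a 1) := by
    rw [tn_zero ht ha, tn_unit ht ha]; exact ⟨hc0, hca⟩
  obtain ⟨p, hp, hfp⟩ := h hc
  exact ⟨p, hp, hfp⟩

lemma tn_div (ht : IsContTNorm f) {a c : ℝ} (ha : a ∈ Icc (0:ℝ) 1)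
    (hc : c ∈ Icc (0:ℝ) 1) (hca : c ≤ a) : f a (tres f a c) = c := by
  refine le_antisymm (f_tres_le ht ha hc.1) ?_
  obtain ⟨p, hp, hfp⟩ := tn_surj ht ha hc.1 hca
  calc c = f a p := hfp.symm
    _ ≤ f a (tres f a c) := tn_mono_right ht ha hp (tres_mem ht ha hc.1)
        (le_tres ht ha hp (le_of_eq hfp))

lemma tn_uc (ht : IsContTNorm f) {ε : ℝ} (hε : 0 < ε) :
    ∃ δ > 0, ∀ r ∈ Icc (0:ℝ) 1, ∀ b ∈ Icc (0:ℝ) 1, ∀ b' ∈ Icc (0:ℝ) 1,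
      |b - b'| ≤ δ → f r b ≤ f r b' + ε := by
  have huc := (isCompact_Icc.prod isCompact_Icc).uniformContinuousOn_of_continuous ht.2.1
  rw [Metric.uniformContinuousOn_iff] at huc
  obtain ⟨δ, hδ, h⟩ := huc ε hε
  refine ⟨δ / 2, by linarith, fun r hr b hb b' hb' habs => ?_⟩
  have := h (r, b) ⟨hr, hb⟩ (r, b') ⟨hr, hb'⟩ (by
    rw [Prod.dist_eq]
    simp only [Real.dist_eq]
    have : |r - r| = 0 := by simp
    rw [this]
    refine lt_of_le_of_lt (sup_le (by linarith) habs) (by linarith))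
  rw [Real.dist_eq] at this
  have := abs_lt.mp this
  linarith [this.1]




noncomputable def SI {Λ : Type*} [Preorder Λ] (g : Λ → ℝ) : ℝ :=
  ⨆ l : Λ, ⨅ σ : {σ : Λ // l ≤ σ}, g σ.1

variable {Λ : Type*} [Nonempty Λ] [SemilatticeSup Λ] {g : Λ → ℝ}

lemma tail_bddBelow (hg : ∀ σ, g σ ∈ Icc (0:ℝ) 1) (l : Λ) :
    BddBelow (Set.range fun σ : {σ : Λ // l ≤ σ} => g σ.1) := by
  refine ⟨0, ?_⟩
  rintro r ⟨σ, rfl⟩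
  exact (hg σ.1).1

lemma tailInf_mem (hg : ∀ σ, g σ ∈ Icc (0:ℝ) 1) (l : Λ) :
    (⨅ σ : {σ : Λ // l ≤ σ}, g σ.1) ∈ Icc (0:ℝ) 1 := by
  haveI : Nonempty {σ : Λ // l ≤ σ} := ⟨⟨l, le_rfl⟩⟩
  constructor
  · exact le_ciInf fun σ => (hg σ.1).1
  · exact le_trans (ciInf_le (tail_bddBelow hg l) ⟨l, le_rfl⟩) (hg l).2

lemma SI_bddAbove (hg : ∀ σ, g σ ∈ Icc (0:ℝ) 1) :
    BddAbove (Set.range fun l : Λ => ⨅ σ : {σ : Λ // l ≤ σ}, g σ.1) := by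
  refine ⟨1, ?_⟩
  rintro r ⟨l, rfl⟩
  exact (tailInf_mem hg l).2

lemma SI_mem (hg : ∀ σ, g σ ∈ Icc (0:ℝ) 1) : SI g ∈ Icc (0:ℝ) 1 := by
  constructor
  · exact le_trans (tailInf_mem hg Classical.ofNonempty).1
      (le_ciSup (SI_bddAbove hg) Classical.ofNonempty)
  · exact ciSup_le fun l => (tailInf_mem hg l).2

lemma SI_tail (hg : ∀ σ, g σ ∈ Icc (0:ℝ) 1) {δ : ℝ} (hδ : 0 < δ) :
    ∃ l : Λ, ∀ σ, l ≤ σ → SI g - δ ≤ g σ := by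
  have h : SI g - δ < SI g := by linarith
  obtain ⟨l, hl⟩ := exists_lt_of_lt_ciSup h
  refine ⟨l, fun σ hσ => ?_⟩
  haveI : Nonempty {σ : Λ // l ≤ σ} := ⟨⟨l, le_rfl⟩⟩
  exact le_trans hl.le (ciInf_le (tail_bddBelow hg l) ⟨σ, hσ⟩)

lemma SI_le (hg : ∀ σ, g σ ∈ Icc (0:ℝ) 1) {N : Λ} {B : ℝ}
    (h : ∀ σ, N ≤ σ → g σ ≤ B) : SI g ≤ B := by
  refine ciSup_le fun l => ?_
  haveI : Nonempty {σ : Λ // l ≤ σ} := ⟨⟨l, le_rfl⟩⟩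
  exact le_trans (ciInf_le (tail_bddBelow hg l) ⟨l ⊔ N, le_sup_left⟩) (h _ le_sup_right)

lemma SI_ge (hg : ∀ σ, g σ ∈ Icc (0:ℝ) 1) {N : Λ} {B : ℝ}
    (h : ∀ σ, N ≤ σ → B ≤ g σ) : B ≤ SI g := by
  haveI : Nonempty {σ : Λ // N ≤ σ} := ⟨⟨N, le_rfl⟩⟩
  have h1 : B ≤ ⨅ σ : {σ : Λ // N ≤ σ}, g σ.1 := le_ciInf fun σ => h σ.1 σ.2
  exact le_trans h1 (le_ciSup (SI_bddAbove hg) N)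


lemma chain1 (ht : IsContTNorm f) {L ψ φ q b c D δ₁ δ₂ ε : ℝ}
    (hLI : L ∈ Icc (0:ℝ) 1) (hψI : ψ ∈ Icc (0:ℝ) 1) (hφI : φ ∈ Icc (0:ℝ) 1)
    (hqI : q ∈ Icc (0:ℝ) 1) (hbI : b ∈ Icc (0:ℝ) 1) (hcI : c ∈ Icc (0:ℝ) 1)
    (hδ₁ : 0 < δ₁) (hδ₂ : 0 < δ₂) (hε : 0 < ε)
    (hψL : ψ ≤ L) (hq1 : φ - δ₁ ≤ q) (hc1 : ψ - δ₁ ≤ c)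
    (hbL : |b - L| ≤ δ₁) (hqb : q ≤ b) (hcb : c ≤ b)
    (hDC : f (tres f b c) q ≤ D)
    (P₁ : ∀ r ∈ Icc (0:ℝ) 1, ∀ s ∈ Icc (0:ℝ) 1, ∀ s' ∈ Icc (0:ℝ) 1,
      |s - s'| ≤ δ₁ → f r s ≤ f r s' + min (ε/5) δ₂)
    (P₂ : ∀ r ∈ Icc (0:ℝ) 1, ∀ s ∈ Icc (0:ℝ) 1, ∀ s' ∈ Icc (0:ℝ) 1,
      |s - s'| ≤ δ₂ → f r s ≤ f r s' + ε/5) :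
    f (tres f L ψ) φ ≤ D + ε := by
  have hbL' := abs_le.mp hbL
  have hzI : tres f L ψ ∈ Icc (0:ℝ) 1 := tres_mem ht hLI hψI.1
  have hwI : tres f b c ∈ Icc (0:ℝ) 1 := tres_mem ht hbI hcI.1
  set z := tres f L ψ with hzdef
  set w := tres f b c with hwdef
  have hfLz : f L z = ψ := tn_div ht hLI hψI hψL
  have hfbw : f b w = c := tn_div ht hbI hcI hcb
  -- q' and p
  have hq'I : min q L ∈ Icc (0:ℝ) 1 := ⟨le_min hqI.1 hLI.1, le_trans (min_le_left _ _) hqI.2⟩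
  obtain ⟨p, hpI, hfp⟩ := tn_surj ht hLI hq'I.1 (min_le_right q L)
  have hq'q : q - δ₁ ≤ min q L := le_min (by linarith) (by linarith)
  -- step 1-2
  have m1 : min (q + δ₁) 1 ∈ Icc (0:ℝ) 1 :=
    ⟨le_min (by linarith [hqI.1]) zero_le_one, min_le_right _ _⟩
  have s1 : f z φ ≤ f z (min (q + δ₁) 1) :=
    tn_mono_right ht hzI hφI m1 (le_min (by linarith) hφI.2)
  have s2 : f z (min (q + δ₁) 1) ≤ f z q + ε/5 := by
    have h := P₁ z hzI (min (q + δ₁) 1) m1 q hqI (abs_le.mpr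
      ⟨by have := le_min (by linarith : q ≤ q + δ₁) hqI.2; linarith,
       by have := min_le_left (q + δ₁) 1; linarith⟩)
    have := min_le_left (ε/5) δ₂
    linarith
  -- step 3
  have s3 : f z q ≤ f z (min q L) + ε/5 := by
    have h := P₁ z hzI q hqI (min q L) hq'I (abs_le.mpr
      ⟨by have := min_le_left q L; linarith, by linarith⟩)
    have := min_le_left (ε/5) δ₂
    linarith
  -- step 4
  have s4 : f z (min q L) = f ψ p := by
    rw [← hfp, ← tn_assoc ht hzI hLI hpI, tn_comm ht hzI hLI, hfLz]
  -- steps 5-6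
  have m2 : min (c + δ₁) 1 ∈ Icc (0:ℝ) 1 :=
    ⟨le_min (by linarith [hcI.1]) zero_le_one, min_le_right _ _⟩
  have s5 : f ψ p ≤ f (min (c + δ₁) 1) p :=
    tn_mono_left ht hψI m2 hpI (le_min (by linarith) hψI.2)
  have s6 : f (min (c + δ₁) 1) p ≤ f c p + ε/5 := by
    have h := P₁ p hpI (min (c + δ₁) 1) m2 c hcI (abs_le.mpr
      ⟨by have := le_min (by linarith [hcI.1] : c ≤ c + δ₁) hcI.2; linarith,
       by have := min_le_left (c + δ₁) 1; linarith⟩)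
    rw [tn_comm ht hpI m2, tn_comm ht hpI hcI] at h
    have := min_le_left (ε/5) δ₂
    linarith
  -- step 7
  have s7 : f c p = f w (f b p) := by
    rw [← hfbw, tn_assoc ht hbI hwI hpI, tn_comm ht hbI (tn_mem ht hwI hpI),
        tn_assoc ht hwI hpI hbI, tn_comm ht hpI hbI]
  -- step 8
  have s8 : f b p ≤ q + δ₂ := by
    have h := P₁ p hpI b hbI L hLI hbL
    rw [tn_comm ht hpI hbI, tn_comm ht hpI hLI] at h
    rw [hfp] at h
    have h1 := min_le_right (ε/5) δ₂
    have h2 := min_le_left q L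
    linarith
  -- steps 9-10
  have hfbpI : f b p ∈ Icc (0:ℝ) 1 := tn_mem ht hbI hpI
  have m3 : min (q + δ₂) 1 ∈ Icc (0:ℝ) 1 :=
    ⟨le_min (by linarith [hqI.1]) zero_le_one, min_le_right _ _⟩
  have s9 : f w (f b p) ≤ f w (min (q + δ₂) 1) :=
    tn_mono_right ht hwI hfbpI m3 (le_min s8 hfbpI.2)
  have s10 : f w (min (q + δ₂) 1) ≤ f w q + ε/5 := by
    exact P₂ w hwI (min (q + δ₂) 1) m3 q hqI (abs_le.mpr
      ⟨by have := le_min (by linarith : q ≤ q + δ₂) hqI.2; linarith,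
       by have := min_le_left (q + δ₂) 1; linarith⟩)
  linarith

end Stmt13Aux

/-- A D(Q)-category (ordered fuzzy set) valued in `([0,1], f, 1)`. -/
def IsDCat {α : Type*} (f : ℝ → ℝ → ℝ) (A : α → α → ℝ) : Prop :=
  (∀ x y, A x y ∈ Set.Icc (0:ℝ) 1) ∧
  (∀ x y, A x y ≤ min (A x x) (A y y)) ∧
  (∀ x y z, f (tres f (A y y) (A y z)) (A x y) ≤ A x z)

/-- A net is forward Cauchy if `lim_{ν ≥ μ} A(x_μ, x_ν)` exists. -/
def FwdCauchy {α : Type*} {Λ : Type*} [Preorder Λ] (A : α → α → ℝ) (x : Λ → α) : Prop :=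
  ∃ L : ℝ, Filter.Tendsto (fun q : Λ × Λ => A (x q.1) (x q.2))
    (Filter.atTop ⊓ Filter.principal {q : Λ × Λ | q.1 ≤ q.2}) (nhds L)

/-- A net is biCauchy if `lim_{μ,ν} A(x_μ, x_ν)` exists. -/
def BiCauchy {α : Type*} {Λ : Type*} [Preorder Λ] (A : α → α → ℝ) (x : Λ → α) : Prop :=
  ∃ L : ℝ, Filter.Tendsto (fun q : Λ × Λ => A (x q.1) (x q.2)) Filter.atTop (nhds L)

/-- The type `⋁_λ ⋀_{μ ≥ λ} A(x_μ, x_μ)` of a net. -/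
noncomputable def genType {α : Type*} {Λ : Type*} [Preorder Λ]
    (A : α → α → ℝ) (x : Λ → α) : ℝ :=
  ⨆ l : Λ, ⨅ σ : {σ : Λ // l ≤ σ}, A (x σ.1) (x σ.1)

/-- The weight `⋁_λ ⋀_{μ ≥ λ} A(−, x_μ)` generated by a net. -/
noncomputable def genWeight {α : Type*} {Λ : Type*} [Preorder Λ]
    (A : α → α → ℝ) (x : Λ → α) : α → ℝ :=
  fun u => ⨆ l : Λ, ⨅ σ : {σ : Λ // l ≤ σ}, A u (x σ.1)

/-- The coweight `⋁_λ ⋀_{μ ≥ λ} A(x_μ, −)` generated by a net. -/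
noncomputable def genCoweight {α : Type*} {Λ : Type*} [Preorder Λ]
    (A : α → α → ℝ) (x : Λ → α) : α → ℝ :=
  fun v => ⨆ l : Λ, ⨅ σ : {σ : Λ // l ≤ σ}, A (x σ.1) v

/-- `s` is a Yoneda limit of the net `x`. -/
noncomputable def YonedaLim {α : Type*} {Λ : Type*} [Preorder Λ]
    (A : α → α → ℝ) (x : Λ → α) (s : α) : Prop :=
  A s s = genType A x ∧ ∀ y, A s y = genCoweight A x y

open Set Stmt13Aux in
/-- the weight `φ` generated by a biCauchy net is Cauchy: the generated
coweight `ψ` is left adjoint to it, i.e. `ψ ∘ φ ≤ A` and `φ ∘ ψ ≥ tφ`. -/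
theorem stmt13 (f : ℝ → ℝ → ℝ) (ht : IsContTNorm f)
    {α : Type*} (A : α → α → ℝ) (hA : IsDCat f A)
    {Λ : Type*} [Nonempty Λ] [SemilatticeSup Λ] (x : Λ → α)
    (hbi : BiCauchy A x) :
    (∀ u v : α,
        f (tres f (genType A x) (genCoweight A x v)) (genWeight A x u) ≤ A u v) ∧
    genType A x ≤
      ⨆ u : α, f (tres f (A u u) (genWeight A x u)) (genCoweight A x u) := by
  obtain ⟨hI01, hord, htri⟩ := hA
  obtain ⟨L, hL⟩ := hbi
  have hLI : L ∈ Icc (0:ℝ) 1 :=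
    isClosed_Icc.mem_of_tendsto hL (Filter.Eventually.of_forall fun q => hI01 _ _)
  have hctrl : ∀ δ : ℝ, 0 < δ →
      ∃ N : Λ, ∀ σ τ : Λ, N ≤ σ → N ≤ τ → |A (x σ) (x τ) - L| ≤ δ := by
    intro δ hδ
    have h := Metric.tendsto_nhds.mp hL δ hδ
    rw [Filter.eventually_atTop] at h
    obtain ⟨q0, hq0⟩ := h
    refine ⟨q0.1 ⊔ q0.2, fun σ τ hσ hτ => ?_⟩
    have h2 := hq0 (σ, τ) (Prod.le_def.mpr ⟨le_trans le_sup_left hσ, le_trans le_sup_right hτ⟩)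
    rw [Real.dist_eq] at h2
    exact h2.le
  have hgT : genType A x = SI (fun σ => A (x σ) (x σ)) := rfl
  have hgW : ∀ u, genWeight A x u = SI (fun σ => A u (x σ)) := fun _ => rfl
  have hgC : ∀ v, genCoweight A x v = SI (fun σ => A (x σ) v) := fun _ => rfl
  have hφI : ∀ u, genWeight A x u ∈ Icc (0:ℝ) 1 := fun u => by
    rw [hgW]; exact SI_mem fun σ => hI01 _ _
  have hψI : ∀ v, genCoweight A x v ∈ Icc (0:ℝ) 1 := fun v => by
    rw [hgC]; exact SI_mem fun σ => hI01 _ _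
  -- the type of the net equals L
  have ha : genType A x = L := by
    rw [hgT]
    refine le_antisymm (le_of_forall_pos_le_add fun δ hδ => ?_) ?_
    · obtain ⟨N, hN⟩ := hctrl δ hδ
      refine SI_le (fun σ => hI01 _ _) (N := N) fun σ hσ => ?_
      have h := abs_le.mp (hN σ σ hσ hσ); linarith [h.2]
    · refine le_of_forall_pos_le_add fun δ hδ => ?_
      obtain ⟨N, hN⟩ := hctrl δ hδ
      have h : L - δ ≤ SI (fun σ => A (x σ) (x σ)) :=
        SI_ge (fun σ => hI01 _ _) (N := N) fun σ hσ => by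
          have h := abs_le.mp (hN σ σ hσ hσ); linarith [h.1]
      linarith
  -- coweights are bounded by L
  have hψle : ∀ v, genCoweight A x v ≤ L := by
    intro v
    rw [hgC]
    refine le_of_forall_pos_le_add fun δ hδ => ?_
    obtain ⟨N, hN⟩ := hctrl δ hδ
    refine SI_le (fun σ => hI01 _ _) (N := N) fun σ hσ => ?_
    have h1 : A (x σ) v ≤ A (x σ) (x σ) := le_trans (hord _ _) (min_le_left _ _)
    have h := abs_le.mp (hN σ σ hσ hσ); linarith [h.2]
  constructor
  · -- Part 1 : ψ ∘ φ ≤ A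
    intro u v
    rw [ha]
    refine le_of_forall_pos_le_add fun ε hε => ?_
    obtain ⟨δ₂, hδ₂, P₂⟩ := tn_uc ht (show (0:ℝ) < ε/5 by linarith)
    obtain ⟨δ₁, hδ₁, P₁⟩ := tn_uc ht (show (0:ℝ) < min (ε/5) δ₂ by
      exact lt_min (by linarith) hδ₂)
    obtain ⟨N, hN⟩ := hctrl δ₁ hδ₁
    obtain ⟨l₁, hl₁⟩ := SI_tail (g := fun σ => A u (x σ)) (fun σ => hI01 _ _) hδ₁
    obtain ⟨l₂, hl₂⟩ := SI_tail (g := fun σ => A (x σ) v) (fun σ => hI01 _ _) hδ₁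
    have hq1 : genWeight A x u - δ₁ ≤ A u (x (l₁ ⊔ l₂ ⊔ N)) := by
      rw [hgW]; exact hl₁ _ (le_trans le_sup_left le_sup_left)
    have hc1 : genCoweight A x v - δ₁ ≤ A (x (l₁ ⊔ l₂ ⊔ N)) v := by
      rw [hgC]; exact hl₂ _ (le_trans le_sup_right le_sup_left)
    have hbL : |A (x (l₁ ⊔ l₂ ⊔ N)) (x (l₁ ⊔ l₂ ⊔ N)) - L| ≤ δ₁ :=
      hN _ _ le_sup_right le_sup_right
    have hch := chain1 ht hLI (hψI v) (hφI u) (hI01 u (x (l₁ ⊔ l₂ ⊔ N)))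
      (hI01 (x (l₁ ⊔ l₂ ⊔ N)) (x (l₁ ⊔ l₂ ⊔ N))) (hI01 (x (l₁ ⊔ l₂ ⊔ N)) v)
      hδ₁ hδ₂ hε (hψle v) hq1 hc1 hbL
      (le_trans (hord _ _) (min_le_right _ _)) (le_trans (hord _ _) (min_le_left _ _))
      (htri u (x (l₁ ⊔ l₂ ⊔ N)) v) P₁ P₂
    linarith
  · -- Part 2 : tφ ≤ φ ∘ ψ
    rw [ha]
    have hbdd : BddAbove (Set.range fun u : α =>
        f (tres f (A u u) (genWeight A x u)) (genCoweight A x u)) := by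
      refine ⟨1, ?_⟩
      rintro r ⟨u, rfl⟩
      exact (tn_mem ht (tres_mem ht (hI01 u u) (hφI u).1) (hψI u)).2
    refine le_of_forall_pos_le_add fun ε hε => ?_
    obtain ⟨δ, hδ, P⟩ := tn_uc ht (show (0:ℝ) < ε/2 by linarith)
    have hδ₀ : 0 < min (δ/2) (ε/4) := lt_min (by linarith) (by linarith)
    set δ₀ := min (δ/2) (ε/4) with hδ₀def
    obtain ⟨N, hN⟩ := hctrl δ₀ hδ₀
    have hb := abs_le.mp (hN N N le_rfl le_rfl)
    have hφge : L - δ₀ ≤ genWeight A x (x N) := by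
      rw [hgW]
      refine SI_ge (fun σ => hI01 _ _) (N := N) fun σ hσ => ?_
      have h := abs_le.mp (hN N σ le_rfl hσ); linarith [h.1]
    have hφle : genWeight A x (x N) ≤ A (x N) (x N) := by
      rw [hgW]
      exact SI_le (fun σ => hI01 _ _) (N := N)
        fun σ hσ => le_trans (hord _ _) (min_le_left _ _)
    have hψge : L - δ₀ ≤ genCoweight A x (x N) := by
      rw [hgC]
      refine SI_ge (fun σ => hI01 _ _) (N := N) fun σ hσ => ?_
      have h := abs_le.mp (hN σ N hσ le_rfl); linarith [h.1]
    have hψle' : genCoweight A x (x N) ≤ L + δ₀ := by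
      rw [hgC]
      refine SI_le (fun σ => hI01 _ _) (N := N) fun σ hσ => ?_
      have h1 : A (x σ) (x N) ≤ L + δ₀ := by
        have h := abs_le.mp (hN σ N hσ le_rfl); linarith [h.2]
      exact h1
    have hrI : tres f (A (x N) (x N)) (genWeight A x (x N)) ∈ Icc (0:ℝ) 1 :=
      tres_mem ht (hI01 _ _) (hφI _).1
    have hr : f (A (x N) (x N)) (tres f (A (x N) (x N)) (genWeight A x (x N)))
        = genWeight A x (x N) := tn_div ht (hI01 _ _) (hφI _) hφle
    have habs : |A (x N) (x N) - genCoweight A x (x N)| ≤ δ := by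
      have h1 := min_le_left (δ/2) (ε/4)
      rw [abs_le]; constructor <;> [linarith [hb.1, hψle'] ; linarith [hb.2, hψge]]
    have hkey := P (tres f (A (x N) (x N)) (genWeight A x (x N))) hrI
      (A (x N) (x N)) (hI01 _ _) (genCoweight A x (x N)) (hψI _) habs
    rw [tn_comm ht hrI (hI01 _ _), hr] at hkey
    -- hkey : genWeight A x (x N) ≤ f (tres ...) (genCoweight ...) + ε/2
    have hsup := le_ciSup hbdd (x N)
    have h1 := min_le_right (δ/2) (ε/4)
    linarith
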